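/- Let 0 < η < 1 and set h_ad(n) = (2η log n/(1-η) - √(2η log n/(1-η)))^{-1/2}. Fix any β > 0, 0 < r < 1. Then as n → ∞: (i) exp(-2β/h_ad(n)^r) ≤ exp(-2β/h_opt(n)^r)(1+o(1)), where h_opt(n) solves 2β/h^r + 2γ/h² = log n with γ = (1-η)/(4η); and (ii) (1/n) exp((1-η)/(2η h_ad(n)²)) = exp(-√((1-η) log n/(2η))), which is o(exp(-2β/h_opt(n)^r)). -/

import Mathlib

open Real Filter

set_option maxHeartbeats 1000000 in
theorem adaptive_bandwidth_rates (η β r : ℝ) (hη0 : 0 < η) (hη1 : η < 1)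
    (hβ : 0 < β) (hr0 : 0 < r) (hr1 : r < 1) (γ : ℝ) (hγ : γ = (1 - η) / (4 * η))
    (had hopt : ℕ → ℝ)
    (hhad : ∀ n : ℕ, had n =
        (2 * η * Real.log n / (1 - η) - Real.sqrt (2 * η * Real.log n / (1 - η))) ^ (-(1 / 2 : ℝ)))
    (hoptpos : ∀ n, 2 ≤ n → 0 < hopt n)
    (hopteq : ∀ n : ℕ, 2 ≤ n → 2 * β / hopt n ^ r + 2 * γ / hopt n ^ 2 = Real.log n) :
    (Filter.limsup
        (fun n : ℕ => Real.exp (-2 * β / had n ^ r) / Real.exp (-2 * β / hopt n ^ r)) atTop ≤ 1) ∧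
      (∀ᶠ n : ℕ in atTop,
        (1 / (n : ℝ)) * Real.exp ((1 - η) / (2 * η * had n ^ 2)) =
          Real.exp (-Real.sqrt ((1 - η) * Real.log n / (2 * η)))) ∧
      Tendsto
        (fun n : ℕ =>
          ((1 / (n : ℝ)) * Real.exp ((1 - η) / (2 * η * had n ^ 2))) /
            Real.exp (-2 * β / hopt n ^ r))
        atTop (nhds 0) := by
  have hη' : 0 < 1 - η := by linarith
  obtain ⟨a, ha_def⟩ : ∃ y : ℝ, y = 2 * η / (1 - η) := ⟨_, rfl⟩
  have ha : 0 < a := by rw [ha_def]; positivity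
  have h2γ : 2 * γ = 1 / a := by rw [hγ, ha_def]; field_simp; ring
  have hLtop : Tendsto (fun n : ℕ => Real.log n) atTop atTop :=
    Real.tendsto_log_atTop.comp tendsto_natCast_atTop_atTop
  -- eventual smallness of the rpow error term
  have hEr_t : Tendsto (fun n : ℕ => 16 * a * β ^ 2 * (a * Real.log n) ^ (r - 1)) atTop (nhds 0) := by
    have h1 : Tendsto (fun y : ℝ => y ^ (r - 1)) atTop (nhds 0) := by
      simpa [neg_sub] using tendsto_rpow_neg_atTop (show (0:ℝ) < 1 - r by linarith)
    have h2 : Tendsto (fun n : ℕ => a * Real.log n) atTop atTop :=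
      hLtop.const_mul_atTop ha
    simpa [mul_zero] using (h1.comp h2).const_mul (16 * a * β ^ 2)
  have hEr_ev : ∀ᶠ n : ℕ in atTop, 16 * a * β ^ 2 * (a * Real.log n) ^ (r - 1) ≤ 1 / a :=
    (hEr_t.eventually_lt_const (show (0:ℝ) < 1 / a by positivity)).mono fun n h => h.le
  -- tendsto of the exp(g) upper bound to 1
  have hg0 : Tendsto (fun n : ℕ => 4 * β * (a * Real.log n) ^ (r / 2 - 1 / 2)) atTop (nhds 0) := by
    have h1 : Tendsto (fun y : ℝ => y ^ (r / 2 - 1 / 2)) atTop (nhds 0) := by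
      simpa [neg_sub] using tendsto_rpow_neg_atTop (show (0:ℝ) < 1 / 2 - r / 2 by linarith)
    have h2 : Tendsto (fun n : ℕ => a * Real.log n) atTop atTop :=
      hLtop.const_mul_atTop ha
    simpa [mul_zero] using (h1.comp h2).const_mul (4 * β)
  have T1 : Tendsto (fun n : ℕ => Real.exp (4 * β * (a * Real.log n) ^ (r / 2 - 1 / 2)))
      atTop (nhds 1) := by
    have := (Real.continuous_exp.tendsto 0).comp hg0
    simpa [Function.comp_def] using this
  have T2 : Tendsto (fun n : ℕ => Real.exp (-Real.sqrt (Real.log n / a) / 2)) atTop (nhds 0) := by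
    have h2 : Tendsto (fun n : ℕ => Real.log n / a) atTop atTop := hLtop.atTop_div_const ha
    have h3 : Tendsto (fun n : ℕ => Real.sqrt (Real.log n / a)) atTop atTop := by
      have hs : Tendsto (fun y : ℝ => y ^ (1/2 : ℝ)) atTop atTop :=
        tendsto_rpow_atTop (by norm_num)
      exact (hs.comp h2).congr fun n => (Real.sqrt_eq_rpow _).symm
    have h4 : Tendsto (fun n : ℕ => -Real.sqrt (Real.log n / a) / 2) atTop atBot :=
      (tendsto_neg_atTop_atBot.comp h3).atBot_div_const (by norm_num)
    exact Real.tendsto_exp_atBot.comp h4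
  -- the big eventual pack
  have hbig : ∀ᶠ n : ℕ in atTop,
      (1 ≤ Real.exp (-2 * β / had n ^ r) / Real.exp (-2 * β / hopt n ^ r)) ∧
      (Real.exp (-2 * β / had n ^ r) / Real.exp (-2 * β / hopt n ^ r) ≤
        Real.exp (4 * β * (a * Real.log n) ^ (r / 2 - 1 / 2))) ∧
      ((1 / (n : ℝ)) * Real.exp ((1 - η) / (2 * η * had n ^ 2)) =
        Real.exp (-Real.sqrt ((1 - η) * Real.log n / (2 * η)))) ∧
      (((1 / (n : ℝ)) * Real.exp ((1 - η) / (2 * η * had n ^ 2))) /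
          Real.exp (-2 * β / hopt n ^ r) ≤ Real.exp (-Real.sqrt (Real.log n / a) / 2)) := by
    filter_upwards [eventually_ge_atTop 2, hLtop.eventually_ge_atTop 1,
      hLtop.eventually_ge_atTop (4 / a), hEr_ev] with n hn2 hL1 hL4 hEr
    have hn0 : (0:ℝ) < n := by exact_mod_cast (show 0 < n by omega)
    obtain ⟨ℓ, hℓ⟩ : ∃ y : ℝ, y = Real.log n := ⟨_, rfl⟩
    rw [← hℓ] at hL1 hL4 hEr ⊢
    have hLpos : 0 < ℓ := by linarith
    have hu : 0 < a * ℓ := by positivity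
    have hbase : 2 * η * ℓ / (1 - η) = a * ℓ := by rw [ha_def]; ring
    obtain ⟨x, hxdef⟩ : ∃ y : ℝ, y = a * ℓ - Real.sqrt (a * ℓ) := ⟨_, rfl⟩
    have h4 : (4:ℝ) ≤ a * ℓ := by
      have := (div_le_iff₀ ha).1 hL4; linarith
    have hsq : Real.sqrt (a * ℓ) ^ 2 = a * ℓ := Real.sq_sqrt hu.le
    have hs0 : 0 ≤ Real.sqrt (a * ℓ) := Real.sqrt_nonneg _
    have hsqle : Real.sqrt (a * ℓ) ≤ a * ℓ / 2 := by
      have hm : 4 * (a * ℓ) ≤ (a * ℓ) * (a * ℓ) := by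
        have := mul_le_mul_of_nonneg_right h4 hu.le
        linarith
      have h1 : a * ℓ ≤ (a * ℓ / 2) ^ 2 := by linarith [hm]
      calc Real.sqrt (a * ℓ) ≤ Real.sqrt ((a * ℓ / 2) ^ 2) := Real.sqrt_le_sqrt h1
        _ = a * ℓ / 2 := Real.sqrt_sq (by linarith)
    have hxge : a * ℓ / 2 ≤ x := by rw [hxdef]; linarith
    have hxpos : 0 < x := by linarith
    have hxle : x ≤ a * ℓ := by rw [hxdef]; linarith
    -- rewrite had
    have hh1 : had n = x ^ (-(1 / 2 : ℝ)) := by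
      have := hhad n
      rw [← hℓ, hbase, ← hxdef] at this
      exact this
    have hhad2 : had n ^ 2 = x⁻¹ := by
      rw [hh1, ← Real.rpow_natCast (x ^ (-(1 / 2 : ℝ))) 2, ← Real.rpow_mul hxpos.le]
      norm_num
      exact Real.rpow_neg_one x
    have hhadr : 2 * β / had n ^ r = 2 * β * x ^ (r / 2) := by
      rw [hh1, ← Real.rpow_mul hxpos.le,
        show -(1 / 2 : ℝ) * r = -(r / 2) by ring, Real.rpow_neg hxpos.le]
      field_simp
    -- hopt facts
    have hop := hoptpos n hn2
    have heq := hopteq n hn2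
    rw [← hℓ] at heq
    have hoptr : 0 < hopt n ^ r := Real.rpow_pos_of_pos hop r
    have hXeq : ((hopt n ^ 2 : ℝ))⁻¹ = a * (ℓ - 2 * β / hopt n ^ r) := by
      have h1 : 2 * γ / hopt n ^ 2 = ℓ - 2 * β / hopt n ^ r := by linarith
      have h2 : ((hopt n ^ 2 : ℝ))⁻¹ = a * (2 * γ / hopt n ^ 2) := by
        rw [h2γ]; field_simp
      rw [h2, h1]
    have hXpos : (0:ℝ) < ((hopt n ^ 2 : ℝ))⁻¹ := by positivity
    have hspos : 0 < 2 * β / hopt n ^ r := by positivity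
    have hXle : ((hopt n ^ 2 : ℝ))⁻¹ ≤ a * ℓ := by
      rw [hXeq]; linarith [mul_pos ha hspos]
    have hXrp : (((hopt n ^ 2 : ℝ))⁻¹) ^ (r / 2 : ℝ) = (hopt n ^ r)⁻¹ := by
      rw [Real.inv_rpow (by positivity), ← Real.rpow_natCast (hopt n) 2,
        ← Real.rpow_mul hop.le]
      norm_num
      congr 1
      ring
    have hseq : 2 * β / hopt n ^ r = 2 * β * (((hopt n ^ 2 : ℝ))⁻¹) ^ (r / 2 : ℝ) := by
      rw [hXrp, div_eq_mul_inv]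
    -- s ≤ 2β (aℓ)^{r/2}
    have hXple : (((hopt n ^ 2 : ℝ))⁻¹) ^ (r / 2 : ℝ) ≤ (a * ℓ) ^ (r / 2 : ℝ) :=
      Real.rpow_le_rpow hXpos.le hXle (by positivity)
    have hs_le : 2 * β / hopt n ^ r ≤ 2 * β * (a * ℓ) ^ (r / 2 : ℝ) := by
      rw [hseq]
      exact mul_le_mul_of_nonneg_left hXple (by positivity)
    -- 2β(aℓ)^{r/2} ≤ (1/2)√(ℓ/a)
    have h16 : 16 * a * β ^ 2 * (a * ℓ) ^ (r : ℝ) ≤ ℓ := by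
      have e : (a * ℓ) ^ (r : ℝ) = (a * ℓ) ^ (r - 1 : ℝ) * (a * ℓ) := by
        rw [← Real.rpow_add_one hu.ne' (r - 1)]; norm_num
      rw [e]
      calc 16 * a * β ^ 2 * ((a * ℓ) ^ (r - 1 : ℝ) * (a * ℓ))
          = 16 * a * β ^ 2 * (a * ℓ) ^ (r - 1 : ℝ) * (a * ℓ) := by ring
        _ ≤ 1 / a * (a * ℓ) := mul_le_mul_of_nonneg_right hEr hu.le
        _ = ℓ := by field_simp
    have htsq : 1 / 2 * Real.sqrt (ℓ / a) = Real.sqrt (ℓ / (4 * a)) := by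
      rw [show ℓ / (4 * a) = (1/2:ℝ)^2 * (ℓ / a) by ring,
        Real.sqrt_mul (by norm_num : (0:ℝ) ≤ (1/2:ℝ)^2),
        Real.sqrt_sq (by norm_num : (0:ℝ) ≤ (1/2:ℝ))]
    have hE3 : 2 * β * (a * ℓ) ^ (r / 2 : ℝ) ≤ 1 / 2 * Real.sqrt (ℓ / a) := by
      rw [htsq]
      rw [Real.le_sqrt (by positivity) (by positivity)]
      have hX2 : (2 * β * (a * ℓ) ^ (r / 2 : ℝ)) ^ 2 = 4 * β ^ 2 * (a * ℓ) ^ (r : ℝ) := by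
        have e : ((a * ℓ) ^ (r / 2 : ℝ)) ^ (2:ℕ) = (a * ℓ) ^ (r : ℝ) := by
          rw [← Real.rpow_natCast ((a * ℓ) ^ (r / 2 : ℝ)) 2, ← Real.rpow_mul hu.le]
          congr 1
          push_cast
          ring
        rw [mul_pow, e]
        ring
      rw [hX2, le_div_iff₀ (by positivity : (0:ℝ) < 4 * a)]
      linarith [h16]
    have hsfin : 2 * β / hopt n ^ r ≤ 1 / 2 * Real.sqrt (ℓ / a) := hs_le.trans hE3
    have htnn : 0 ≤ Real.sqrt (ℓ / a) := Real.sqrt_nonneg _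
    have hat : a * Real.sqrt (ℓ / a) = Real.sqrt (a * ℓ) := by
      rw [show a * ℓ = a ^ 2 * (ℓ / a) by field_simp,
        Real.sqrt_mul (by positivity : (0:ℝ) ≤ a ^ 2), Real.sqrt_sq ha.le]
    -- X ≥ x and X - x ≤ √(aℓ)
    have hXx : x ≤ ((hopt n ^ 2 : ℝ))⁻¹ := by
      rw [hXeq, hxdef]
      have h1 : 2 * β / hopt n ^ r ≤ Real.sqrt (ℓ / a) := by linarith
      have h2 : a * (2 * β / hopt n ^ r) ≤ a * Real.sqrt (ℓ / a) :=
        mul_le_mul_of_nonneg_left h1 ha.le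
      rw [hat] at h2
      linarith
    have hXmx : ((hopt n ^ 2 : ℝ))⁻¹ - x ≤ Real.sqrt (a * ℓ) := by
      rw [hXeq, hxdef]
      have := mul_pos ha hspos
      linarith
    -- concavity-type bound
    have hq1 : (1:ℝ) ≤ ((hopt n ^ 2 : ℝ))⁻¹ / x := (one_le_div hxpos).2 hXx
    have hqp : (((hopt n ^ 2 : ℝ))⁻¹ / x) ^ (r / 2 : ℝ) ≤ ((hopt n ^ 2 : ℝ))⁻¹ / x := by
      calc (((hopt n ^ 2 : ℝ))⁻¹ / x) ^ (r / 2 : ℝ)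
          ≤ (((hopt n ^ 2 : ℝ))⁻¹ / x) ^ (1 : ℝ) :=
            Real.rpow_le_rpow_of_exponent_le hq1 (by linarith)
        _ = ((hopt n ^ 2 : ℝ))⁻¹ / x := Real.rpow_one _
    have hXpbound : (((hopt n ^ 2 : ℝ))⁻¹) ^ (r / 2 : ℝ) ≤
        x ^ (r / 2 : ℝ) * (((hopt n ^ 2 : ℝ))⁻¹ / x) := by
      have e : ((hopt n ^ 2 : ℝ))⁻¹ = x * (((hopt n ^ 2 : ℝ))⁻¹ / x) := by
        field_simp
      calc (((hopt n ^ 2 : ℝ))⁻¹) ^ (r / 2 : ℝ)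
          = x ^ (r / 2 : ℝ) * ((((hopt n ^ 2 : ℝ))⁻¹ / x)) ^ (r / 2 : ℝ) := by
            rw [← Real.mul_rpow hxpos.le (by positivity), ← e]
        _ ≤ x ^ (r / 2 : ℝ) * (((hopt n ^ 2 : ℝ))⁻¹ / x) :=
            mul_le_mul_of_nonneg_left hqp (by positivity)
    have hxpX : x ^ (r / 2 : ℝ) ≤ (((hopt n ^ 2 : ℝ))⁻¹) ^ (r / 2 : ℝ) :=
      Real.rpow_le_rpow hxpos.le hXx (by positivity)
    have hdnn : 0 ≤ 2 * β / hopt n ^ r - 2 * β * x ^ (r / 2 : ℝ) := by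
      have := mul_le_mul_of_nonneg_left hxpX (show (0:ℝ) ≤ 2 * β by positivity)
      rw [hseq]; linarith
    -- d ≤ g
    have hxprle : x ^ (r / 2 : ℝ) ≤ (a * ℓ) ^ (r / 2 : ℝ) :=
      Real.rpow_le_rpow hxpos.le hxle (by positivity)
    have hfrac : (((hopt n ^ 2 : ℝ))⁻¹ - x) / x ≤ Real.sqrt (a * ℓ) / (a * ℓ / 2) :=
      div_le_div₀ (Real.sqrt_nonneg _) hXmx (by positivity) hxge
    have hd_le : 2 * β / hopt n ^ r - 2 * β * x ^ (r / 2 : ℝ) ≤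
        4 * β * (a * ℓ) ^ (r / 2 - 1 / 2 : ℝ) := by
      have h1 : 2 * β / hopt n ^ r ≤
          2 * β * (x ^ (r / 2 : ℝ) * (((hopt n ^ 2 : ℝ))⁻¹ / x)) := by
        rw [hseq]
        exact mul_le_mul_of_nonneg_left hXpbound (by positivity)
      have h2 : 2 * β * (x ^ (r / 2 : ℝ) * (((hopt n ^ 2 : ℝ))⁻¹ / x)) - 2 * β * x ^ (r / 2 : ℝ)
          = 2 * β * (x ^ (r / 2 : ℝ) * ((((hopt n ^ 2 : ℝ))⁻¹ - x) / x)) := by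
        field_simp
      have h3 : x ^ (r / 2 : ℝ) * ((((hopt n ^ 2 : ℝ))⁻¹ - x) / x) ≤
          (a * ℓ) ^ (r / 2 : ℝ) * (Real.sqrt (a * ℓ) / (a * ℓ / 2)) :=
        mul_le_mul hxprle hfrac (div_nonneg (by linarith) hxpos.le) (by positivity)
      have h4 : (a * ℓ) ^ (r / 2 : ℝ) * (Real.sqrt (a * ℓ) / (a * ℓ / 2)) =
          2 * (a * ℓ) ^ (r / 2 - 1 / 2 : ℝ) := by
        have hss : Real.sqrt (a * ℓ) * Real.sqrt (a * ℓ) = a * ℓ := Real.mul_self_sqrt hu.le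
        have hsp : 0 < Real.sqrt (a * ℓ) := Real.sqrt_pos.2 hu
        have hdd : Real.sqrt (a * ℓ) / (a * ℓ / 2) = 2 / Real.sqrt (a * ℓ) := by
          rw [div_eq_div_iff (by positivity) hsp.ne']
          linear_combination hss
        rw [hdd, Real.rpow_sub hu, ← Real.sqrt_eq_rpow]
        ring
      have h5 := mul_le_mul_of_nonneg_left h3 (show (0:ℝ) ≤ 2 * β by positivity)
      have h4' : 2 * β * ((a * ℓ) ^ (r / 2 : ℝ) * (Real.sqrt (a * ℓ) / (a * ℓ / 2))) =
          4 * β * (a * ℓ) ^ (r / 2 - 1 / 2 : ℝ) := by rw [h4]; ring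
      linarith [h1, h2, h5, h4']
    -- exp-ratio identity
    have hr1eq : Real.exp (-2 * β / had n ^ r) / Real.exp (-2 * β / hopt n ^ r) =
        Real.exp (2 * β / hopt n ^ r - 2 * β * x ^ (r / 2 : ℝ)) := by
      rw [← Real.exp_sub]
      congr 1
      have e1 : (-2 * β) / had n ^ r = -(2 * β / had n ^ r) := by ring
      have e2 : (-2 * β) / hopt n ^ r = -(2 * β / hopt n ^ r) := by ring
      rw [e1, e2, hhadr]; ring
    -- part (ii) equality
    have hexpL : Real.exp ℓ = n := by rw [hℓ]; exact Real.exp_log hn0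
    have e1 : (1 - η) / (2 * η * had n ^ 2) = ℓ - Real.sqrt (ℓ / a) := by
      rw [hhad2, show 2 * η * x⁻¹ = 2 * η / x from (div_eq_mul_inv (2*η) x).symm,
        div_div_eq_mul_div, hxdef, ← hat, ha_def]
      field_simp
    have e2 : (1 - η) * ℓ / (2 * η) = ℓ / a := by rw [ha_def]; field_simp
    have h2eq' : (1 / (n : ℝ)) * Real.exp ((1 - η) / (2 * η * had n ^ 2)) =
        Real.exp (-Real.sqrt (ℓ / a)) := by
      rw [e1, ← hexpL, Real.exp_sub, Real.exp_neg]
      field_simp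
    have h2eq : (1 / (n : ℝ)) * Real.exp ((1 - η) / (2 * η * had n ^ 2)) =
        Real.exp (-Real.sqrt ((1 - η) * ℓ / (2 * η))) := by
      rw [h2eq', e2]
    refine ⟨?_, ?_, h2eq, ?_⟩
    · rw [hr1eq]; exact Real.one_le_exp hdnn
    · rw [hr1eq]; exact Real.exp_le_exp.2 hd_le
    · rw [h2eq', ← Real.exp_sub]
      apply Real.exp_le_exp.2
      have e3 : -Real.sqrt (ℓ / a) - -2 * β / hopt n ^ r =
          2 * β / hopt n ^ r - Real.sqrt (ℓ / a) := by ring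
      rw [e3]
      linarith
  refine ⟨?_, ?_, ?_⟩
  · have ht : Tendsto (fun n : ℕ => Real.exp (-2 * β / had n ^ r) /
        Real.exp (-2 * β / hopt n ^ r)) atTop (nhds 1) :=
      tendsto_of_tendsto_of_tendsto_of_le_of_le' tendsto_const_nhds T1
        (hbig.mono fun n h => h.1) (hbig.mono fun n h => h.2.1)
    exact le_of_eq ht.limsup_eq
  · exact hbig.mono fun n h => h.2.2.1
  · exact tendsto_of_tendsto_of_tendsto_of_le_of_le' tendsto_const_nhds T2
      (Eventually.of_forall fun n => by positivity) (hbig.mono fun n h => h.2.2.2)
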